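/- For integers 1 ≤ j ≤ k with k ≥ 2 and k + j even, letting f = WMON_{k,j}, the Chow parameter of every citizen satisfies, for each i with 2 ≤ i ≤ k: f̂({i}) = C(k−2, (k−j)/2 − 1) / 2^{k−1}. -/

import Mathlib

/-- sign(z) = 1 if z > 0 and 0 otherwise. -/
noncomputable def Rsign (z : ℝ) : ℝ := if 0 < z then 1 else 0

/-- Encoding of {-1,1}: `true ↦ 1`, `false ↦ -1`. -/
def pm (b : Bool) : ℝ := if b then 1 else -1

/-- The weak monarchy function WMON_{k,j}(x) = sign(j·x_1 + x_2 + ⋯ + x_k). -/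
noncomputable def WMON (k j : ℕ) (x : Fin k → Bool) : ℝ :=
  Rsign (∑ i : Fin k, (if (i : ℕ) = 0 then (j : ℝ) else 1) * pm (x i))

/-- The Chow parameter (degree-1 Fourier coefficient) f̂({i}) = 2^{-k}·Σ_x f(x)·x_i. -/
noncomputable def chow (k : ℕ) (f : (Fin k → Bool) → ℝ) (i : Fin k) : ℝ :=
  (∑ x, f x * pm (x i)) / 2 ^ k

/-- Binomial coefficient with integer lower index, with the convention
`C(n,r) = 0` for `r < 0`. -/
def chooseZ (n : ℕ) (r : ℤ) : ℕ := if 0 ≤ r then Nat.choose n r.toNat else 0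

/-! ### Auxiliary definitions and lemmas -/

def pmz (b : Bool) : ℤ := if b then 1 else -1

lemma pm_cast (b : Bool) : pm b = ((pmz b : ℤ) : ℝ) := by cases b <;> simp [pm, pmz]

lemma rsign_int (m : ℤ) : Rsign (m : ℝ) = if 0 < m then 1 else 0 := by
  simp [Rsign, Int.cast_pos]

lemma pair_val (T : ℤ) (hT : Even T) :
    Rsign ((pmz true + T : ℤ) : ℝ) * pm true + Rsign ((pmz false + T : ℤ) : ℝ) * pm false
      = if T = 0 then (1 : ℝ) else 0 := by
  simp only [pmz, pm, if_true, if_false, Bool.false_eq_true]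
  rw [rsign_int, rsign_int]
  obtain ⟨r, hr⟩ := hT
  split_ifs <;> first | omega | norm_num

lemma sum_split {α : Type*} [Fintype α] [DecidableEq α] {M : Type*} [AddCommMonoid M]
    (i : α) (g : α → M) :
    ∑ l, g l = g i + ∑ l : {l // l ≠ i}, g l := by
  rw [← Finset.add_sum_erase Finset.univ g (Finset.mem_univ i)]
  congr 1
  exact Finset.sum_subtype _ (fun x => by simp [Finset.mem_erase]) g

lemma card_ne {γ : Type*} [Fintype γ] [DecidableEq γ] (a : γ) :
    Fintype.card {l : γ // l ≠ a} = Fintype.card γ - 1 := by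
  have := Fintype.card_subtype_compl (fun l : γ => l = a)
  simp only [Fintype.card_subtype_eq] at this
  exact this

lemma chooseZ_symm (n : ℕ) (a b : ℤ) (hab : a + b = n) : chooseZ n a = chooseZ n b := by
  unfold chooseZ
  by_cases ha : 0 ≤ a <;> by_cases hb : 0 ≤ b
  · rw [if_pos ha, if_pos hb]
    have h2 : b.toNat = n - a.toNat := by omega
    rw [h2, Nat.choose_symm (by omega)]
  · rw [if_pos ha, if_neg hb, Nat.choose_eq_zero_of_lt (by omega)]
  · rw [if_neg ha, if_pos hb, Nat.choose_eq_zero_of_lt (by omega)]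
  · omega

lemma sum_pmz {α : Type*} [Fintype α] [DecidableEq α] (z : α → Bool) :
    (∑ l, pmz (z l)) = 2 * ((Finset.univ.filter fun l => z l).card : ℤ) - Fintype.card α := by
  have : ∀ b : Bool, pmz b = 2 * (if b then (1:ℤ) else 0) - 1 := by decide
  simp only [this, Finset.sum_sub_distrib, ← Finset.mul_sum, Finset.sum_boole,
    Finset.sum_const, Finset.card_univ, nsmul_eq_mul, mul_one]

lemma count_trues {α : Type*} [Fintype α] [DecidableEq α] (t : ℕ) :
    (Finset.univ.filter fun z : α → Bool => (Finset.univ.filter fun l => z l).card = t).card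
      = (Fintype.card α).choose t := by
  rw [← Finset.card_univ, ← Finset.card_powersetCard]
  apply Finset.card_nbij' (fun z => Finset.univ.filter fun l => z l = true)
    (fun s l => decide (l ∈ s))
  · intro z hz
    simp only [Finset.mem_coe, Finset.mem_filter, Finset.mem_univ, true_and] at hz
    simp [Finset.mem_powersetCard, hz]
  · intro s hs
    simp only [Finset.mem_coe, Finset.mem_powersetCard] at hs
    simp only [Finset.mem_coe, Finset.mem_filter, Finset.mem_univ, true_and, ← hs.2]
    congr 1; ext l; simp
  · intro z hz; ext l; simp
  · intro s hs; ext l; simp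

lemma count_sum_pmz {α : Type*} [Fintype α] [DecidableEq α] (m : ℤ)
    (hpar : Even ((Fintype.card α : ℤ) + m)) :
    (Finset.univ.filter fun z : α → Bool => (∑ l, pmz (z l)) = m).card
      = chooseZ (Fintype.card α) (((Fintype.card α : ℤ) + m) / 2) := by
  by_cases h0 : 0 ≤ (Fintype.card α : ℤ) + m
  · have hdvd : (2 : ℤ) ∣ (Fintype.card α : ℤ) + m := hpar.two_dvd
    have hd2 : 0 ≤ ((Fintype.card α : ℤ) + m) / 2 := Int.ediv_nonneg h0 (by norm_num)
    have h2t : ((Fintype.card α : ℤ) + m) = 2 * ((((Fintype.card α : ℤ) + m) / 2).toNat : ℤ) := by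
      rw [Int.toNat_of_nonneg hd2]; omega
    rw [chooseZ, if_pos hd2, ← count_trues (α := α)]
    congr 1; ext z
    simp only [Finset.mem_filter, Finset.mem_univ, true_and, sum_pmz]
    omega
  · rw [chooseZ, if_neg (by omega)]
    rw [Finset.card_eq_zero, Finset.filter_eq_empty_iff]
    intro z _
    rw [sum_pmz]
    have : (0:ℤ) ≤ ((Finset.univ.filter fun l => z l).card : ℤ) := by positivity
    omega

theorem stmt_11 (j k : ℕ) (hj : 1 ≤ j) (hjk : j ≤ k) (hk : 2 ≤ k)
    (he : Even (k + j)) :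
    ∀ i : Fin k, (i : ℕ) ≠ 0 →
      chow k (WMON k j) i
        = (chooseZ (k - 2) (((k : ℤ) - (j : ℤ)) / 2 - 1) : ℝ) / 2 ^ (k - 1) := by
  intro i hi
  classical
  obtain ⟨r, hr⟩ := he
  have hk0 : 0 < k := by omega
  set i0 : Fin k := ⟨0, hk0⟩ with hi0
  have hii0 : i0 ≠ i := by
    intro h; apply hi; rw [← h]
  set w : Fin k → ℤ := (fun l : Fin k => if (l : ℕ) = 0 then (j : ℤ) else 1) with hw
  have hwi : w i = 1 := by simp [hw, hi]
  have hwi0 : w i0 = (j : ℤ) := by simp [hw, hi0]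
  have hWM : ∀ x : Fin k → Bool, WMON k j x = Rsign (((∑ l, w l * pmz (x l) : ℤ) : ℝ)) := by
    intro x
    unfold WMON
    congr 1
    push_cast
    exact Finset.sum_congr rfl fun l _ => by
      simp [hw, pm_cast, apply_ite (fun z : ℤ => (z : ℝ)), mul_ite, ite_mul]
  -- total weight
  have htot : ∑ l, w l = (k : ℤ) + ((j : ℤ) - 1) := by
    have hpt : ∀ l : Fin k, w l = 1 + (if l = i0 then (j : ℤ) - 1 else 0) := by
      intro l
      have hiff : (l : ℕ) = 0 ↔ l = i0 := by rw [Fin.ext_iff]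
      rw [hw]
      simp only [hiff]
      split_ifs <;> ring
    rw [Finset.sum_congr rfl fun l _ => hpt l, Finset.sum_add_distrib, Finset.sum_const,
      Finset.sum_ite_eq' Finset.univ i0 (fun _ => (j : ℤ) - 1)]
    simp [Finset.card_univ]
  have hsubw : ∑ l : {l : Fin k // l ≠ i}, w l.1 = (k : ℤ) + (j : ℤ) - 2 := by
    have h := sum_split i w
    rw [htot, hwi] at h
    linarith
  set T : ({l : Fin k // l ≠ i} → Bool) → ℤ :=
    fun y => ∑ l : {l : Fin k // l ≠ i}, w l.1 * pmz (y l) with hT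
  have hTeven : ∀ y, Even (T y) := by
    intro y
    have h1 : Even (T y - ∑ l : {l : Fin k // l ≠ i}, w l.1) := by
      rw [hT, ← Finset.sum_sub_distrib, even_iff_two_dvd]
      apply Finset.dvd_sum
      intro l _
      have hfac : w l.1 * pmz (y l) - w l.1 = w l.1 * (pmz (y l) - 1) := by ring
      rw [hfac]
      exact Dvd.dvd.mul_left (by cases (y l) <;> simp [pmz]) _
    have h2 : Even ((k : ℤ) + (j : ℤ) - 2) := ⟨(r : ℤ) - 1, by omega⟩
    have h3 : Even (∑ l : {l : Fin k // l ≠ i}, w l.1) := hsubw ▸ h2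
    have := h1.add h3
    simpa using this
  -- step 1: pair up over coordinate i
  have key1 : (∑ x, WMON k j x * pm (x i))
      = ∑ y : {l : Fin k // l ≠ i} → Bool, (if T y = 0 then (1 : ℝ) else 0) := by
    rw [← Equiv.sum_comp (Equiv.funSplitAt i Bool).symm
      (fun x => WMON k j x * pm (x i)), Fintype.sum_prod_type_right]
    refine Finset.sum_congr rfl fun y _ => ?_
    have hxi : ∀ b : Bool, (Equiv.funSplitAt i Bool).symm (b, y) i = b := by
      intro b; rw [Equiv.funSplitAt_symm_apply, dif_pos rfl]
    have hS : ∀ b : Bool,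
        (∑ l, w l * pmz ((Equiv.funSplitAt i Bool).symm (b, y) l)) = pmz b + T y := by
      intro b
      rw [sum_split i]
      refine congrArg₂ (· + ·) ?_ ?_
      · rw [hxi b, hwi, one_mul]
      · refine Finset.sum_congr rfl fun l _ => ?_
        rw [Equiv.funSplitAt_symm_apply, dif_neg l.2, Subtype.coe_eta]
    rw [Fintype.sum_bool, hWM, hWM, hxi, hxi, hS, hS]
    exact pair_val (T y) (hTeven y)
  -- step 2: count
  set z0 : {l : Fin k // l ≠ i} := ⟨i0, hii0⟩ with hz0
  have hT2 : ∀ (b : Bool) (z : {l : {l : Fin k // l ≠ i} // l ≠ z0} → Bool),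
      T ((Equiv.funSplitAt z0 Bool).symm (b, z))
        = (j : ℤ) * pmz b + ∑ l : {l : {l : Fin k // l ≠ i} // l ≠ z0}, pmz (z l) := by
    intro b z
    show (∑ l : {l : Fin k // l ≠ i},
        w l.1 * pmz (((Equiv.funSplitAt z0 Bool).symm (b, z)) l)) = _
    rw [sum_split z0]
    refine congrArg₂ (· + ·) ?_ ?_
    · rw [Equiv.funSplitAt_symm_apply, dif_pos rfl, hwi0]
    · refine Finset.sum_congr rfl fun l _ => ?_
      rw [Equiv.funSplitAt_symm_apply, dif_neg l.2, Subtype.coe_eta]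
      have hne : l.1.1 ≠ i0 := fun h => l.2 (Subtype.ext h)
      have hne' : (l.1.1 : ℕ) ≠ 0 := fun h => hne (Fin.ext h)
      rw [hw]
      simp [hne']
  have hcard2 : Fintype.card {l : {l : Fin k // l ≠ i} // l ≠ z0} = k - 2 := by
    rw [card_ne, card_ne]
    simp only [Fintype.card_fin]
    omega
  have key2 : (∑ y : {l : Fin k // l ≠ i} → Bool, (if T y = 0 then (1 : ℝ) else 0))
      = 2 * (chooseZ (k - 2) (((k : ℤ) - (j : ℤ)) / 2 - 1) : ℝ) := by
    rw [← Equiv.sum_comp (Equiv.funSplitAt z0 Bool).symm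
      (fun y => if T y = 0 then (1 : ℝ) else 0), Fintype.sum_prod_type]
    rw [Fintype.sum_bool]
    have e1 : (∑ z : {l : {l : Fin k // l ≠ i} // l ≠ z0} → Bool,
        (if T ((Equiv.funSplitAt z0 Bool).symm (true, z)) = 0 then (1:ℝ) else 0))
        = ((Finset.univ.filter fun z : {l : {l : Fin k // l ≠ i} // l ≠ z0} → Bool =>
            (∑ l, pmz (z l)) = -(j:ℤ)).card : ℝ) := by
      rw [← Finset.sum_boole]
      refine Finset.sum_congr rfl fun z _ => ?_
      rw [hT2]
      have hpt : pmz true = 1 := rfl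
      rw [hpt, mul_one]
      exact if_congr (by constructor <;> intro h <;> omega) rfl rfl
    have e2 : (∑ z : {l : {l : Fin k // l ≠ i} // l ≠ z0} → Bool,
        (if T ((Equiv.funSplitAt z0 Bool).symm (false, z)) = 0 then (1:ℝ) else 0))
        = ((Finset.univ.filter fun z : {l : {l : Fin k // l ≠ i} // l ≠ z0} → Bool =>
            (∑ l, pmz (z l)) = (j:ℤ)).card : ℝ) := by
      rw [← Finset.sum_boole]
      refine Finset.sum_congr rfl fun z _ => ?_
      rw [hT2]
      have hpf : pmz false = -1 := rfl
      rw [hpf]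
      exact if_congr (by constructor <;> intro h <;> omega) rfl rfl
    rw [e1, e2]
    have hpar1 : Even ((Fintype.card {l : {l : Fin k // l ≠ i} // l ≠ z0} : ℤ) + (-(j:ℤ))) := by
      rw [hcard2]; exact Int.even_iff.2 (by omega)
    have hpar2 : Even ((Fintype.card {l : {l : Fin k // l ≠ i} // l ≠ z0} : ℤ) + (j:ℤ)) := by
      rw [hcard2]; exact Int.even_iff.2 (by omega)
    rw [count_sum_pmz _ hpar1, count_sum_pmz _ hpar2, hcard2]
    have hq1 : (((k - 2 : ℕ) : ℤ) + -(j:ℤ)) / 2 = ((k : ℤ) - (j : ℤ)) / 2 - 1 := by omega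
    have hq2 : chooseZ (k - 2) ((((k - 2 : ℕ) : ℤ) + (j:ℤ)) / 2)
        = chooseZ (k - 2) (((k : ℤ) - (j : ℤ)) / 2 - 1) := by
      apply chooseZ_symm
      omega
    rw [hq1, hq2]
    push_cast
    ring
  -- conclusion
  rw [chow, key1, key2]
  have h2k : (2 : ℝ) ^ k = 2 * 2 ^ (k - 1) := by
    rw [← pow_succ']
    congr 1
    omega
  rw [h2k]
  have : (2 : ℝ) ^ (k - 1) ≠ 0 := by positivity
  field_simp
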